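/- arXiv:2406.07950 — 2 statements merged into one kernel-verified Lean document; each statement's English description precedes it below -/
import Mathlib

section
/- (Energy a posteriori error estimate for the primal problem.) Under the primal error setting with coercivity constants α_A ≥ α_{A,LB} > 0 and α_G ≥ α_{G,LB} > 0, one has the parameter-independent space-time energy bound ∑_{m=1}^{N} [ (eᵐ)ᵀ M eᵐ + Δt·(eᵐ)ᵀ S eᵐ ] = ∑_{m=1}^{N} ‖eᵐ‖²_{G*} ≤ ((T + Δt)/(α_{G,LB}·α_{A,LB}))·∑_{m=1}^{N} ‖rᵐ‖₋₁², where T = N·Δt. -/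
open Matrix BigOperators Finset

/-- The energy norm `‖v‖_{G*} = √(vᵀ G* v)` induced by a matrix `G`. -/
noncomputable def normG {d : ℕ} (G : Matrix (Fin d) (Fin d) ℝ) (v : Fin d → ℝ) : ℝ :=
  Real.sqrt (v ⬝ᵥ G.mulVec v)

/-- The dual norm `‖r‖₋₁ = sup_{v ≠ 0} (rᵀ v)/‖v‖_{G*}`. -/
noncomputable def dualNorm {d : ℕ} (G : Matrix (Fin d) (Fin d) ℝ) (r : Fin d → ℝ) : ℝ :=
  ⨆ v : {v : Fin d → ℝ // v ≠ 0}, (r ⬝ᵥ (v : Fin d → ℝ)) / normG G (v : Fin d → ℝ)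

/-- The symmetric part `(A + Aᵀ)/2` of a matrix. -/
noncomputable def symPart {d : ℕ} (A : Matrix (Fin d) (Fin d) ℝ) : Matrix (Fin d) (Fin d) ℝ :=
  ((1 : ℝ)/2) • (A + Aᵀ)

lemma dot_symm {d : ℕ} {B : Matrix (Fin d) (Fin d) ℝ} (hB : Bᵀ = B) (x y : Fin d → ℝ) :
    x ⬝ᵥ B.mulVec y = y ⬝ᵥ B.mulVec x := by
  rw [Matrix.dotProduct_mulVec]; nth_rw 1 [← hB]
  rw [Matrix.vecMul_transpose, dotProduct_comm]

lemma cs_aux {d : ℕ} {G : Matrix (Fin d) (Fin d) ℝ} (hsym : Gᵀ = G)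
    (hnn : ∀ x, 0 ≤ x ⬝ᵥ G.mulVec x) (x y : Fin d → ℝ) :
    x ⬝ᵥ G.mulVec y ≤ normG G x * normG G y := by
  have key : (x ⬝ᵥ G.mulVec y)^2 ≤ (x ⬝ᵥ G.mulVec x) * (y ⬝ᵥ G.mulVec y) := by
    have hd := discrim_le_zero (a := y ⬝ᵥ G.mulVec y) (b := 2*(x ⬝ᵥ G.mulVec y))
        (c := x ⬝ᵥ G.mulVec x) ?_
    · unfold discrim at hd
      nlinarith [hd]
    · intro t
      have hsy : y ⬝ᵥ G.mulVec x = x ⬝ᵥ G.mulVec y := dot_symm hsym y x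
      have hexp : (x + t • y) ⬝ᵥ G.mulVec (x + t • y)
          = (y ⬝ᵥ G.mulVec y) * (t*t) + (2*(x ⬝ᵥ G.mulVec y))*t + (x ⬝ᵥ G.mulVec x) := by
        simp [Matrix.mulVec_add, Matrix.mulVec_smul, dotProduct_add, add_dotProduct,
          dotProduct_smul, smul_dotProduct, smul_eq_mul, hsy]
        ring
      have := hnn (x + t • y)
      rw [hexp] at this
      exact this
  have h1 : x ⬝ᵥ G.mulVec y ≤ Real.sqrt ((x ⬝ᵥ G.mulVec y)^2) := by
    rw [Real.sqrt_sq_eq_abs]; exact le_abs_self _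
  calc x ⬝ᵥ G.mulVec y ≤ Real.sqrt ((x ⬝ᵥ G.mulVec y)^2) := h1
    _ ≤ Real.sqrt ((x ⬝ᵥ G.mulVec x) * (y ⬝ᵥ G.mulVec y)) := Real.sqrt_le_sqrt key
    _ = normG G x * normG G y := by rw [normG, normG, ← Real.sqrt_mul (hnn x)]

lemma dual_bound {d : ℕ} {G : Matrix (Fin d) (Fin d) ℝ} (hG : G.PosDef) (r v : Fin d → ℝ) :
    r ⬝ᵥ v ≤ dualNorm G r * normG G v := by
  have hGsym : Gᵀ = G := by simpa [Matrix.IsHermitian] using hG.1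
  have hGnn : ∀ x, 0 ≤ x ⬝ᵥ G.mulVec x := fun x => by simpa using hG.posSemidef.dotProduct_mulVec_nonneg x
  by_cases hv : v = 0
  · simp [hv, normG]
  · have hvpos : 0 < v ⬝ᵥ G.mulVec v := by simpa using hG.dotProduct_mulVec_pos hv
    have hnv : 0 < normG G v := Real.sqrt_pos.mpr hvpos
    have hu : G.mulVec (G⁻¹.mulVec r) = r := by
      rw [Matrix.mulVec_mulVec,
        Matrix.mul_nonsing_inv _ (isUnit_iff_ne_zero.mpr (ne_of_gt hG.det_pos)),
        Matrix.one_mulVec]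
    set u := G⁻¹.mulVec r with hu'
    have hbdd : BddAbove (Set.range fun w : {v : Fin d → ℝ // v ≠ 0} =>
        (r ⬝ᵥ (w : Fin d → ℝ)) / normG G (w : Fin d → ℝ)) := by
      refine ⟨normG G u, ?_⟩
      rintro x ⟨w, rfl⟩
      have hwpos : 0 < normG G (w : Fin d → ℝ) :=
        Real.sqrt_pos.mpr (by simpa using hG.dotProduct_mulVec_pos w.2)
      rw [div_le_iff₀ hwpos]
      have hre : r ⬝ᵥ (w : Fin d → ℝ) = u ⬝ᵥ G.mulVec (w : Fin d → ℝ) := by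
        conv_lhs => rw [← hu]
        rw [dotProduct_comm]
        exact dot_symm hGsym w u
      rw [hre]
      exact cs_aux hGsym hGnn u w
    have hle : (r ⬝ᵥ v) / normG G v ≤ dualNorm G r := le_ciSup hbdd ⟨v, hv⟩
    calc r ⬝ᵥ v = ((r ⬝ᵥ v) / normG G v) * normG G v := by field_simp
      _ ≤ dualNorm G r * normG G v := mul_le_mul_of_nonneg_right hle hnv.le

theorem stmt6 {d : ℕ} (hd : 1 ≤ d)
    (M A S G : Matrix (Fin d) (Fin d) ℝ) (hM : M.PosSemidef) (hS : S.IsSymm)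
    (Δt : ℝ) (hΔt : 0 < Δt)
    (hGdef : G = M + Δt • S) (hG : G.PosDef)
    (N : ℕ) (hN : 1 ≤ N)
    (αA αALB : ℝ) (hαALB : 0 < αALB) (hαALBle : αALB ≤ αA)
    (hcoA : ∀ v : Fin d → ℝ, αA * (normG G v)^2 ≤ v ⬝ᵥ (symPart A).mulVec v)
    (αG αGLB : ℝ) (hαGLB : 0 < αGLB) (hαGLBle : αGLB ≤ αG)
    (hcoG : ∀ v : Fin d → ℝ,
      αG * (normG G v)^2 ≤ v ⬝ᵥ (M + Δt • symPart A).mulVec v)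
    (e r : ℕ → Fin d → ℝ) (he0 : e 0 = 0)
    (hstep : ∀ k, 1 ≤ k → k ≤ N →
      (M + Δt • A).mulVec (e k) = M.mulVec (e (k - 1)) - Δt • r k) :
    (∑ m ∈ Finset.Icc 1 N,
        (e m ⬝ᵥ M.mulVec (e m) + Δt * (e m ⬝ᵥ S.mulVec (e m))) =
      ∑ m ∈ Finset.Icc 1 N, (normG G (e m))^2) ∧
    ∑ m ∈ Finset.Icc 1 N, (normG G (e m))^2 ≤
      ((N * Δt + Δt) / (αGLB * αALB)) * ∑ m ∈ Finset.Icc 1 N, (dualNorm G (r m))^2 := by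
  have hGsym : Gᵀ = G := by simpa [Matrix.IsHermitian] using hG.1
  have hMsym : Mᵀ = M := by simpa [Matrix.IsHermitian] using hM.1
  have hGnn : ∀ x, 0 ≤ x ⬝ᵥ G.mulVec x := fun x => by simpa using hG.posSemidef.dotProduct_mulVec_nonneg x
  have hMnn : ∀ x, 0 ≤ x ⬝ᵥ M.mulVec x := fun x => by simpa using hM.dotProduct_mulVec_nonneg x
  have hqsq : ∀ v : Fin d → ℝ, (normG G v)^2 = v ⬝ᵥ G.mulVec v :=
    fun v => Real.sq_sqrt (hGnn v)
  have hαA : 0 < αA := lt_of_lt_of_le hαALB hαALBle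
  have hαG : 0 < αG := lt_of_lt_of_le hαGLB hαGLBle
  -- part 1
  have hpart1 : ∀ v : Fin d → ℝ,
      v ⬝ᵥ M.mulVec v + Δt * (v ⬝ᵥ S.mulVec v) = (normG G v)^2 := by
    intro v
    rw [hqsq v, hGdef]
    simp [Matrix.add_mulVec, Matrix.smul_mulVec, dotProduct_add, dotProduct_smul,
      smul_eq_mul]
  refine ⟨Finset.sum_congr rfl fun m _ => hpart1 (e m), ?_⟩
  -- abbreviations
  set a : ℕ → ℝ := fun n => e n ⬝ᵥ M.mulVec (e n) with ha
  set b : ℕ → ℝ := fun n => e n ⬝ᵥ (symPart A).mulVec (e n) with hb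
  have hsymA : ∀ v : Fin d → ℝ, v ⬝ᵥ (symPart A).mulVec v = v ⬝ᵥ A.mulVec v := by
    intro v
    have h1 : v ⬝ᵥ Aᵀ.mulVec v = v ⬝ᵥ A.mulVec v := by
      rw [Matrix.dotProduct_mulVec, Matrix.vecMul_transpose, dotProduct_comm]
    simp only [symPart, Matrix.smul_mulVec, Matrix.add_mulVec, dotProduct_smul,
      dotProduct_add, smul_eq_mul, h1]
    ring
  have hbq : ∀ n, αA * (normG G (e n))^2 ≤ b n := fun n => hcoA (e n)
  have hbnn : ∀ n, 0 ≤ b n := fun n => le_trans (by positivity) (hbq n)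
  have hann : ∀ n, 0 ≤ a n := fun n => hMnn (e n)
  -- step inequality
  have hstepineq : ∀ k, 1 ≤ k → k ≤ N →
      αA * (a k - a (k-1)) + αA * Δt * b k ≤ Δt * (dualNorm G (r k))^2 := by
    intro k hk1 hkN
    have hid := congrArg (fun w => (e k) ⬝ᵥ w) (hstep k hk1 hkN)
    simp only [dotProduct_sub, dotProduct_smul, smul_eq_mul] at hid
    have hlhs : e k ⬝ᵥ (M + Δt • A).mulVec (e k) = a k + Δt * b k := by
      simp only [Matrix.add_mulVec, Matrix.smul_mulVec, dotProduct_add, dotProduct_smul,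
        smul_eq_mul, ha, hb, hsymA (e k)]
    rw [hlhs] at hid
    -- hid : a k + Δt * b k = e k ⬝ᵥ M.mulVec (e (k-1)) - Δt * (e k ⬝ᵥ r k)
    have hcross : e k ⬝ᵥ M.mulVec (e (k-1)) ≤ a k / 2 + a (k-1) / 2 := by
      have h0 : 0 ≤ (e k - e (k-1)) ⬝ᵥ M.mulVec (e k - e (k-1)) := hMnn _
      have hsy : e k ⬝ᵥ M.mulVec (e (k-1)) = e (k-1) ⬝ᵥ M.mulVec (e k) := dot_symm hMsym _ _
      simp only [Matrix.mulVec_sub, dotProduct_sub, sub_dotProduct, hsy] at h0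
      simp only [ha]
      linarith
    have hres : -(e k ⬝ᵥ r k) ≤ dualNorm G (r k) * normG G (e k) := by
      have hdd := dual_bound hG (r k) (-(e k))
      have hneg : normG G (-(e k)) = normG G (e k) := by
        simp [normG, Matrix.mulVec_neg, dotProduct_neg, neg_dotProduct]
      rw [hneg] at hdd
      have : r k ⬝ᵥ (-(e k)) = -(e k ⬝ᵥ r k) := by
        rw [dotProduct_neg, dotProduct_comm]
      linarith [hdd, this.ge.trans hdd]
    set s := normG G (e k) with hs
    set ρ := dualNorm G (r k) with hρ
    have hyoung : 2 * αA * (ρ * s) ≤ ρ^2 + αA^2 * s^2 := by nlinarith [sq_nonneg (ρ - αA * s)]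
    have hE : a k + Δt * b k ≤ a k / 2 + a (k-1) / 2 + Δt * (ρ * s) := by
      have h1 : Δt * (-(e k ⬝ᵥ r k)) ≤ Δt * (ρ * s) :=
        mul_le_mul_of_nonneg_left hres hΔt.le
      linarith [hid, hcross, h1]
    have hb2 : αA * s^2 ≤ b k := hbq k
    nlinarith [mul_le_mul_of_nonneg_left hE (by positivity : (0:ℝ) ≤ 2*αA),
      mul_le_mul_of_nonneg_left hyoung hΔt.le,
      mul_le_mul_of_nonneg_left hb2 (by positivity : (0:ℝ) ≤ αA * Δt)]
  -- summed claim
  have hsum : ∀ n, n ≤ N →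
      αA * a n + αA * Δt * (∑ m ∈ Finset.Icc 1 n, b m)
        ≤ Δt * ∑ m ∈ Finset.Icc 1 n, (dualNorm G (r m))^2 := by
    intro n
    induction n with
    | zero => intro _; simp [ha, he0]
    | succ n ih =>
      intro hn
      have h1' := ih (Nat.le_of_succ_le hn)
      have h1 := h1'
      have h2 := hstepineq (n+1) (Nat.succ_le_succ (Nat.zero_le n)) hn
      simp only [Nat.add_sub_cancel] at h2
      rw [Finset.sum_Icc_succ_top (Nat.succ_le_succ (Nat.zero_le n)),
        Finset.sum_Icc_succ_top (Nat.succ_le_succ (Nat.zero_le n))]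
      linarith
  have hRnn : 0 ≤ ∑ m ∈ Finset.Icc 1 N, (dualNorm G (r m))^2 :=
    Finset.sum_nonneg fun m _ => sq_nonneg _
  -- bound each a m
  have haBound : ∀ m ∈ Finset.Icc 1 N,
      αA * a m ≤ Δt * ∑ k ∈ Finset.Icc 1 N, (dualNorm G (r k))^2 := by
    intro m hm
    have hmN : m ≤ N := (Finset.mem_Icc.mp hm).2
    have h1 := hsum m hmN
    have h2 : 0 ≤ αA * Δt * (∑ k ∈ Finset.Icc 1 m, b k) := by
      have := Finset.sum_nonneg fun k (_ : k ∈ Finset.Icc 1 m) => hbnn k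
      positivity
    have h3 : ∑ k ∈ Finset.Icc 1 m, (dualNorm G (r k))^2
        ≤ ∑ k ∈ Finset.Icc 1 N, (dualNorm G (r k))^2 :=
      Finset.sum_le_sum_of_subset_of_nonneg
        (Finset.Icc_subset_Icc_right hmN) (fun k _ _ => sq_nonneg _)
    have h4 := mul_le_mul_of_nonneg_left h3 hΔt.le
    linarith
  -- bound the b sum
  have hbBound : αA * Δt * (∑ m ∈ Finset.Icc 1 N, b m)
      ≤ Δt * ∑ m ∈ Finset.Icc 1 N, (dualNorm G (r m))^2 := by
    have h1 := hsum N le_rfl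
    have h2 : 0 ≤ αA * a N := mul_nonneg hαA.le (hann N)
    linarith [hann N, mul_nonneg hαA.le (hann N)]
  -- coercivity sum
  have hGsum : αG * ∑ m ∈ Finset.Icc 1 N, (normG G (e m))^2
      ≤ (∑ m ∈ Finset.Icc 1 N, a m) + Δt * ∑ m ∈ Finset.Icc 1 N, b m := by
    rw [Finset.mul_sum, Finset.mul_sum, ← Finset.sum_add_distrib]
    refine Finset.sum_le_sum fun m _ => ?_
    have := hcoG (e m)
    simp only [Matrix.add_mulVec, Matrix.smul_mulVec, dotProduct_add, dotProduct_smul,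
      smul_eq_mul] at this
    simpa [ha, hb] using this
  have haSum : αA * ∑ m ∈ Finset.Icc 1 N, a m
      ≤ (N : ℝ) * (Δt * ∑ k ∈ Finset.Icc 1 N, (dualNorm G (r k))^2) := by
    rw [Finset.mul_sum]
    calc ∑ m ∈ Finset.Icc 1 N, αA * a m
        ≤ ∑ m ∈ Finset.Icc 1 N, Δt * ∑ k ∈ Finset.Icc 1 N, (dualNorm G (r k))^2 :=
          Finset.sum_le_sum haBound
      _ = (N : ℝ) * (Δt * ∑ k ∈ Finset.Icc 1 N, (dualNorm G (r k))^2) := by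
          rw [Finset.sum_const, Nat.card_Icc, Nat.add_sub_cancel, nsmul_eq_mul]
  -- combine
  set Q := ∑ m ∈ Finset.Icc 1 N, (normG G (e m))^2 with hQ
  set R := ∑ m ∈ Finset.Icc 1 N, (dualNorm G (r m))^2 with hR
  have hmain : (αG * αA) * Q ≤ ((N : ℝ) * Δt + Δt) * R := by
    have h1 := mul_le_mul_of_nonneg_left hGsum hαA.le
    -- αA * (αG * Q) ≤ αA * (Σa + Δt Σb)
    have h2 : αA * ((∑ m ∈ Finset.Icc 1 N, a m) + Δt * ∑ m ∈ Finset.Icc 1 N, b m)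
        ≤ (N : ℝ) * (Δt * R) + Δt * R := by
      have := hbBound
      nlinarith [haSum, hbBound]
    nlinarith [h1, h2]
  have hQle : Q ≤ (((N : ℝ) * Δt + Δt) / (αG * αA)) * R := by
    rw [div_mul_eq_mul_div, le_div_iff₀ (by positivity)]
    nlinarith [hmain]
  have hconst : (((N : ℝ) * Δt + Δt) / (αG * αA)) * R
      ≤ (((N : ℝ) * Δt + Δt) / (αGLB * αALB)) * R := by
    have hnum : (0:ℝ) ≤ (N : ℝ) * Δt + Δt := by positivity
    have hdiv : (((N : ℝ) * Δt + Δt) / (αG * αA))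
        ≤ (((N : ℝ) * Δt + Δt) / (αGLB * αALB)) := by
      apply div_le_div_of_nonneg_left hnum (by positivity)
      exact mul_le_mul hαGLBle hαALBle hαALB.le hαG.le
    exact mul_le_mul_of_nonneg_right hdiv hRnn
  linarith
end

section
/- Under the dual error setting with coercivity constant α_A, for each n ∈ {0, …, N−1} one has (εⁿ)ᵀ M εⁿ + Δt·∑_{m=n}^{N−1} (εᵐ)ᵀ Aᵀ εᵐ ≤ (Δt/α_A)·∑_{m=n}^{N−1} ‖ϱᵐ‖₋₁². -/
open Matrix BigOperators Finset

-- symmetry of the bilinear form of a symmetric matrix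
lemma dot_symm_s9 {d : ℕ} {M : Matrix (Fin d) (Fin d) ℝ} (hM : Mᵀ = M)
    (a b : Fin d → ℝ) : a ⬝ᵥ M.mulVec b = b ⬝ᵥ M.mulVec a := by
  rw [Matrix.dotProduct_mulVec, ← Matrix.mulVec_transpose, hM, dotProduct_comm]

lemma dot_transpose_self {d : ℕ} (A : Matrix (Fin d) (Fin d) ℝ) (v : Fin d → ℝ) :
    v ⬝ᵥ Aᵀ.mulVec v = v ⬝ᵥ A.mulVec v := by
  rw [Matrix.dotProduct_mulVec, ← Matrix.mulVec_transpose, Matrix.transpose_transpose,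
    dotProduct_comm]

lemma dot_symPart {d : ℕ} (A : Matrix (Fin d) (Fin d) ℝ) (v : Fin d → ℝ) :
    v ⬝ᵥ (symPart A).mulVec v = v ⬝ᵥ Aᵀ.mulVec v := by
  simp only [symPart, Matrix.add_mulVec, Matrix.smul_mulVec, dotProduct_smul,
    dotProduct_add, dot_transpose_self, smul_eq_mul]
  ring

lemma normG_sq {d : ℕ} {G : Matrix (Fin d) (Fin d) ℝ} (hG : G.PosDef) (v : Fin d → ℝ) :
    (normG G v) ^ 2 = v ⬝ᵥ G.mulVec v := by
  have h : (0:ℝ) ≤ v ⬝ᵥ G.mulVec v := by simpa using hG.posSemidef.dotProduct_mulVec_nonneg v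
  rw [normG, Real.sq_sqrt h]

lemma normG_pos {d : ℕ} {G : Matrix (Fin d) (Fin d) ℝ} (hG : G.PosDef)
    {v : Fin d → ℝ} (hv : v ≠ 0) : 0 < normG G v := by
  have := hG.dotProduct_mulVec_pos hv
  simp only [star_trivial] at this
  exact Real.sqrt_pos.mpr this

-- Cauchy–Schwarz for the G-inner product
lemma cs_G {d : ℕ} {G : Matrix (Fin d) (Fin d) ℝ} (hG : G.PosDef) (a b : Fin d → ℝ) :
    a ⬝ᵥ G.mulVec b ≤ normG G a * normG G b := by
  by_cases hb : b = 0
  · simp [hb, normG, Matrix.mulVec_zero]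
  · have hGsym : Gᵀ = G := hG.1
    have hbb : 0 < b ⬝ᵥ G.mulVec b := by simpa using hG.dotProduct_mulVec_pos hb
    have haa : (0:ℝ) ≤ a ⬝ᵥ G.mulVec a := by simpa using hG.posSemidef.dotProduct_mulVec_nonneg a
    set t : ℝ := (a ⬝ᵥ G.mulVec b) / (b ⬝ᵥ G.mulVec b) with ht
    have hnn : (0:ℝ) ≤ (a - t • b) ⬝ᵥ G.mulVec (a - t • b) := by
      simpa using hG.posSemidef.dotProduct_mulVec_nonneg (a - t • b)
    have hexp : (a - t • b) ⬝ᵥ G.mulVec (a - t • b) =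
        a ⬝ᵥ G.mulVec a - 2 * t * (a ⬝ᵥ G.mulVec b) + t^2 * (b ⬝ᵥ G.mulVec b) := by
      have hsymm := dot_symm_s9 hGsym a b
      simp only [Matrix.mulVec_sub, Matrix.mulVec_smul, sub_dotProduct, dotProduct_sub,
        smul_dotProduct, dotProduct_smul, smul_eq_mul]
      rw [dot_symm_s9 hGsym b a]
      ring
    have h5 : t * (b ⬝ᵥ G.mulVec b) = a ⬝ᵥ G.mulVec b := by
      rw [ht]; field_simp
    have key : (a ⬝ᵥ G.mulVec b)^2 ≤ (a ⬝ᵥ G.mulVec a) * (b ⬝ᵥ G.mulVec b) := by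
      rw [hexp] at hnn
      nlinarith [mul_nonneg hnn hbb.le, h5, sq_nonneg t]
    calc a ⬝ᵥ G.mulVec b ≤ |a ⬝ᵥ G.mulVec b| := le_abs_self _
      _ = Real.sqrt ((a ⬝ᵥ G.mulVec b)^2) := (Real.sqrt_sq_eq_abs _).symm
      _ ≤ Real.sqrt ((a ⬝ᵥ G.mulVec a) * (b ⬝ᵥ G.mulVec b)) :=
          Real.sqrt_le_sqrt key
      _ = normG G a * normG G b := by rw [normG, normG, Real.sqrt_mul haa]

-- pairing bound: r⬝v ≤ ‖r‖₋₁ ‖v‖_G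
lemma pairing_le {d : ℕ} (hd : 1 ≤ d) {G : Matrix (Fin d) (Fin d) ℝ} (hG : G.PosDef)
    (r v : Fin d → ℝ) : r ⬝ᵥ v ≤ dualNorm G r * normG G v := by
  have hGsym : Gᵀ = G := hG.1
  have hdet : IsUnit G.det := isUnit_iff_ne_zero.mpr (ne_of_gt hG.det_pos)
  -- boundedness of the sup
  set C : ℝ := normG G (G⁻¹.mulVec r) with hC
  have hrw : ∀ w : Fin d → ℝ, r ⬝ᵥ w = (G⁻¹.mulVec r) ⬝ᵥ G.mulVec w := by
    intro w
    rw [Matrix.dotProduct_mulVec, ← Matrix.mulVec_transpose, hGsym,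
      Matrix.mulVec_mulVec, Matrix.mul_nonsing_inv G hdet, Matrix.one_mulVec]
  have hbound : ∀ w : {v : Fin d → ℝ // v ≠ 0},
      (r ⬝ᵥ (w : Fin d → ℝ)) / normG G (w : Fin d → ℝ) ≤ C := by
    rintro ⟨w, hw⟩
    have h1 : r ⬝ᵥ w ≤ C * normG G w := by rw [hrw w]; exact cs_G hG _ _
    have h2 : 0 < normG G w := normG_pos hG hw
    rw [div_le_iff₀ h2]
    exact h1
  have hbdd : BddAbove (Set.range fun v : {v : Fin d → ℝ // v ≠ 0} =>
      (r ⬝ᵥ (v : Fin d → ℝ)) / normG G (v : Fin d → ℝ)) := by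
    refine ⟨C, ?_⟩
    rintro x ⟨w, rfl⟩
    exact hbound w
  have hne : Nonempty {v : Fin d → ℝ // v ≠ 0} := by
    refine ⟨⟨fun _ => 1, ?_⟩⟩
    intro h
    have := congrFun h ⟨0, hd⟩
    simpa using this
  by_cases hv : v = 0
  · simp [hv, normG, Matrix.mulVec_zero]
  · have hle : (r ⬝ᵥ v) / normG G v ≤ dualNorm G r :=
      le_ciSup hbdd (⟨v, hv⟩ : {v : Fin d → ℝ // v ≠ 0})
    have h2 : 0 < normG G v := normG_pos hG hv
    calc r ⬝ᵥ v = (r ⬝ᵥ v) / normG G v * normG G v := by field_simp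
      _ ≤ dualNorm G r * normG G v := by
          exact mul_le_mul_of_nonneg_right hle h2.le

theorem stmt9 {d : ℕ} (hd : 1 ≤ d)
    (G M A : Matrix (Fin d) (Fin d) ℝ) (hG : G.PosDef) (hM : M.PosSemidef)
    (Δt : ℝ) (hΔt : 0 < Δt) (N : ℕ) (hN : 1 ≤ N)
    (αA : ℝ) (hαA : 0 < αA)
    (hcoA : ∀ v : Fin d → ℝ, αA * (normG G v)^2 ≤ v ⬝ᵥ (symPart A).mulVec v)
    (ε ϱ : ℕ → Fin d → ℝ) (hεN : ε N = 0)
    (hstep : ∀ k, k < N →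
      (M + Δt • Aᵀ).mulVec (ε k) = M.mulVec (ε (k + 1)) - Δt • ϱ k)
    (n : ℕ) (hn : n < N) :
    ε n ⬝ᵥ M.mulVec (ε n) +
        Δt * ∑ m ∈ Finset.Ico n N, ε m ⬝ᵥ Aᵀ.mulVec (ε m) ≤
      (Δt / αA) * ∑ m ∈ Finset.Ico n N, (dualNorm G (ϱ m))^2 := by
  have hMsym : Mᵀ = M := hM.1
  -- one-step estimate
  have onestep : ∀ k, k < N →
      ε k ⬝ᵥ M.mulVec (ε k) + Δt * (ε k ⬝ᵥ Aᵀ.mulVec (ε k)) ≤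
        ε (k+1) ⬝ᵥ M.mulVec (ε (k+1)) + (Δt / αA) * (dualNorm G (ϱ k))^2 := by
    intro k hk
    set e := ε k
    set e' := ε (k+1)
    have heq : e ⬝ᵥ M.mulVec e + Δt * (e ⬝ᵥ Aᵀ.mulVec e) =
        e ⬝ᵥ M.mulVec e' - Δt * (ϱ k ⬝ᵥ e) := by
      have h := congrArg (fun w => e ⬝ᵥ w) (hstep k hk)
      simp only [Matrix.add_mulVec, Matrix.smul_mulVec, dotProduct_add, dotProduct_sub,
        dotProduct_smul, smul_eq_mul] at h
      rw [h, dotProduct_comm e (ϱ k)]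
    have hMbound : e ⬝ᵥ M.mulVec e' ≤
        (1/2) * (e ⬝ᵥ M.mulVec e) + (1/2) * (e' ⬝ᵥ M.mulVec e') := by
      have hnn : (0:ℝ) ≤ (e - e') ⬝ᵥ M.mulVec (e - e') := by simpa using hM.dotProduct_mulVec_nonneg (e - e')
      have hsymm : e' ⬝ᵥ M.mulVec e = e ⬝ᵥ M.mulVec e' := dot_symm_s9 hMsym e' e
      simp only [Matrix.mulVec_sub, sub_dotProduct, dotProduct_sub] at hnn
      linarith
    have hpair : -(ϱ k ⬝ᵥ e) ≤ dualNorm G (ϱ k) * normG G e := by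
      have := pairing_le hd hG (ϱ k) (-e)
      have hneg : normG G (-e) = normG G e := by
        simp [normG, Matrix.mulVec_neg]
      rw [hneg] at this
      simpa using this
    have hAM : dualNorm G (ϱ k) * normG G e ≤
        (1/(2*αA)) * (dualNorm G (ϱ k))^2 + (αA/2) * (normG G e)^2 := by
      have hid : (1/(2*αA)) * (dualNorm G (ϱ k) - αA * normG G e)^2 =
          (1/(2*αA)) * (dualNorm G (ϱ k))^2 + (αA/2) * (normG G e)^2
            - dualNorm G (ϱ k) * normG G e := by
        field_simp
        ring
      nlinarith [mul_nonneg (by positivity : (0:ℝ) ≤ 1/(2*αA))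
        (sq_nonneg (dualNorm G (ϱ k) - αA * normG G e)), hid]
    have hco : αA * (normG G e)^2 ≤ e ⬝ᵥ Aᵀ.mulVec e := by
      rw [← dot_symPart]; exact hcoA e
    have hP := mul_le_mul_of_nonneg_left (hpair.trans hAM) hΔt.le
    rw [mul_add] at hP
    have hC := mul_le_mul_of_nonneg_left hco hΔt.le
    have e1 : Δt * ((1/(2*αA)) * (dualNorm G (ϱ k))^2)
        = (1/2) * ((Δt/αA) * (dualNorm G (ϱ k))^2) := by
      field_simp
      try ring
    have e2 : Δt * ((αA/2) * (normG G e)^2) = (1/2) * (Δt * (αA * (normG G e)^2)) := by ring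
    have e3 : Δt * (-(ϱ k ⬝ᵥ e)) = -(Δt * (ϱ k ⬝ᵥ e)) := by ring
    linarith [heq, hMbound, hP, hC, e1, e2, e3]
  -- downward induction
  have main : ∀ j, j ≤ N →
      ε (N - j) ⬝ᵥ M.mulVec (ε (N - j)) +
        Δt * ∑ m ∈ Finset.Ico (N - j) N, ε m ⬝ᵥ Aᵀ.mulVec (ε m) ≤
      (Δt / αA) * ∑ m ∈ Finset.Ico (N - j) N, (dualNorm G (ϱ m))^2 := by
    intro j
    induction j with
    | zero => intro _; simp [hεN]
    | succ j ih =>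
      intro hj
      have hjN : j ≤ N := Nat.le_of_succ_le hj
      have hk : N - (j+1) < N := by omega
      have hsucc : N - (j+1) + 1 = N - j := by omega
      set k := N - (j+1) with hkdef
      rw [Finset.sum_eq_sum_Ico_succ_bot hk, Finset.sum_eq_sum_Ico_succ_bot hk]
      rw [hsucc]
      have ih' := ih hjN
      have hos := onestep k hk
      rw [hsucc] at hos
      nlinarith [ih', hos, hΔt]
  have := main (N - n) (Nat.sub_le _ _)
  rwa [Nat.sub_sub_self (le_of_lt hn)] at this
end
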